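/- Let R be a finite ring with identity having at least one nonzero idempotent and at least one unit. Then Cl₂(R) is isomorphic to Shu^t_n(I(R)), where t = |{u ∈ U(R) : u² = 1}| and n = |U(R)|. -/

import Mathlib

/-- The `(t,n)`-shuriken graph of `G` (with `1`-indexed copies `1,…,n` of the
paper encoded as `Fin n`, `0`-indexed). A new vertex `z` (encoded `none`) is
added to `G`, and `n` copies are taken. Edges: copies of edges of `G` across
all pairs of copies; all edges within copy `i` for `i ≤ t`; and all edges
between copies `i` and `n + t + 1 - i` for `t + 1 ≤ i ≤ (n + t)/2`. -/
def Shu (t n : ℕ) {V : Type*} (G : SimpleGraph V) :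
    SimpleGraph (Fin n × Option V) where
  Adj x y :=
    (∃ u v, x.2 = some u ∧ y.2 = some v ∧ G.Adj u v) ∨
    (x.1 = y.1 ∧ x.1.val < t ∧ x.2 ≠ y.2) ∨
    (x.1 ≠ y.1 ∧ x.1.val + y.1.val = n + t - 1 ∧ t ≤ x.1.val ∧ t ≤ y.1.val)
  symm := by
    constructor
    rintro x y (⟨u, v, h1, h2, h3⟩ | ⟨h1, h2, h3⟩ | ⟨h1, h2, h3, h4⟩)
    · exact Or.inl ⟨v, u, h2, h1, h3.symm⟩
    · exact Or.inr (Or.inl ⟨h1.symm, h1 ▸ h2, h3.symm⟩)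
    · exact Or.inr (Or.inr ⟨h1.symm, by omega, h4, h3⟩)
  loopless := by
    constructor
    rintro x (⟨u, v, h1, h2, h3⟩ | ⟨h1, h2, h3⟩ | ⟨h1, h2, h3⟩)
    · rw [h1] at h2
      injection h2 with h
      exact G.loopless.irrefl u (h ▸ h3)
    · exact h3 rfl
    · exact h1 rfl

/-- The clean graph `Cl₂(R)`. -/
def Cl2 (R : Type*) [Ring R] :
    SimpleGraph ({e : R // e ^ 2 = e ∧ e ≠ 0} × Rˣ) where
  Adj x y := x ≠ y ∧
    ((x.1.1 * y.1.1 = 0 ∧ y.1.1 * x.1.1 = 0) ∨ (x.2 * y.2 = 1 ∧ y.2 * x.2 = 1))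
  symm := by
    constructor
    rintro x y ⟨hne, h⟩
    exact ⟨hne.symm, by tauto⟩
  loopless := by constructor; rintro x ⟨hne, -⟩; exact hne rfl

/-- The idempotent graph `I(R)`: vertices are the nontrivial idempotents, with
`e`, `f` adjacent iff `ef = fe = 0`. -/
def IdemGraph (R : Type*) [Ring R] :
    SimpleGraph {e : R // e ^ 2 = e ∧ e ≠ 0 ∧ e ≠ 1} where
  Adj e f := e.1 * f.1 = 0 ∧ f.1 * e.1 = 0
  symm := by constructor; rintro e f ⟨h1, h2⟩; exact ⟨h2, h1⟩
  loopless := by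
    constructor
    rintro ⟨e, he, he0, he1⟩ ⟨h1, -⟩
    exact he0 (by rw [← he, sq, h1])

private lemma involEquiv {α : Type*} [Finite α] (f : α → α)
    (hf : ∀ a, f (f a) = a) (hfix : ∀ a, f a ≠ a) :
    ∃ e : α ≃ Fin (Nat.card α), ∀ a,
      (e a).val + (e (f a)).val = Nat.card α - 1 := by
  classical
  haveI : Fintype α := Fintype.ofFinite α
  have hinj : Function.Injective f := fun a b h => by
    have := congrArg f h; rwa [hf, hf] at this
  have hcardn : Nat.card α = Fintype.card α := Nat.card_eq_fintype_card
  set r := Fintype.equivFin α with hr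
  have hne : ∀ a, r a ≠ r (f a) := fun a h => hfix a ((r.injective h).symm)
  set P : Finset α := Finset.univ.filter (fun a => r a < r (f a)) with hPdef
  have hmem : ∀ a, f a ∈ P ↔ a ∉ P := by
    intro a
    simp only [hPdef, Finset.mem_filter, Finset.mem_univ, true_and, hf, not_lt]
    exact ⟨le_of_lt, fun h => lt_of_le_of_ne h (hne a).symm⟩
  have himg : P.image f = Pᶜ := by
    ext a
    simp only [Finset.mem_image, Finset.mem_compl]
    constructor
    · rintro ⟨b, hb, rfl⟩
      intro hcon
      exact (hmem b).mp hcon hb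
    · intro h
      exact ⟨f a, (hmem a).mpr h, hf a⟩
  have hcard : 2 * P.card = Fintype.card α := by
    have h1 : (P.image f).card = P.card := Finset.card_image_of_injective _ hinj
    have h2 : Pᶜ.card = Fintype.card α - P.card := Finset.card_compl P
    have h3 : P.card ≤ Fintype.card α := by
      simpa using Finset.card_le_univ P
    rw [himg, h2] at h1
    omega
  let φ : {x // x ∈ P} ≃ Fin P.card :=
    (Fintype.equivFin _).trans (finCongr (Fintype.card_coe P))
  have hmem' : ∀ a, a ∉ P → f a ∈ P := fun a h => (hmem a).mpr h
  let g : α → Fin (Nat.card α) := fun a =>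
    if h : a ∈ P then ⟨(φ ⟨a, h⟩).val, by have := (φ ⟨a, h⟩).is_lt; omega⟩
    else ⟨Nat.card α - 1 - (φ ⟨f a, hmem' a h⟩).val, by
      have := (φ ⟨f a, hmem' a h⟩).is_lt
      have h0 : 0 < P.card := Finset.card_pos.mpr ⟨f a, hmem' a h⟩
      omega⟩
  have hginj : Function.Injective g := by
    intro a b hab
    simp only [g] at hab
    by_cases ha : a ∈ P <;> by_cases hb : b ∈ P
    · rw [dif_pos ha, dif_pos hb] at hab
      have := φ.injective (Fin.ext (by simpa using congrArg Fin.val hab))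
      exact congrArg Subtype.val this
    · rw [dif_pos ha, dif_neg hb] at hab
      have h1 := (φ ⟨a, ha⟩).is_lt
      have h2 := (φ ⟨f b, hmem' b hb⟩).is_lt
      have := congrArg Fin.val hab
      simp only at this
      omega
    · rw [dif_neg ha, dif_pos hb] at hab
      have h1 := (φ ⟨b, hb⟩).is_lt
      have h2 := (φ ⟨f a, hmem' a ha⟩).is_lt
      have := congrArg Fin.val hab
      simp only at this
      omega
    · rw [dif_neg ha, dif_neg hb] at hab
      have h1 := (φ ⟨f a, hmem' a ha⟩).is_lt
      have h2 := (φ ⟨f b, hmem' b hb⟩).is_lt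
      have := congrArg Fin.val hab
      simp only at this
      have heq : (φ ⟨f a, hmem' a ha⟩) = (φ ⟨f b, hmem' b hb⟩) := Fin.ext (by omega)
      have := congrArg Subtype.val (φ.injective heq)
      simp only at this
      have := congrArg f this
      rwa [hf, hf] at this
  have hgbij : Function.Bijective g :=
    (Fintype.bijective_iff_injective_and_card g).mpr ⟨hginj, by simp [hcardn]⟩
  refine ⟨Equiv.ofBijective g hgbij, ?_⟩
  intro a
  show (g a).val + (g (f a)).val = Nat.card α - 1
  simp only [g]
  by_cases ha : a ∈ P
  · have hfa : f a ∉ P := fun hcon => (hmem a).mp hcon ha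
    rw [dif_pos ha, dif_neg hfa]
    have hsub : (⟨f (f a), hmem' (f a) hfa⟩ : {x // x ∈ P}) = ⟨a, ha⟩ :=
      Subtype.ext (hf a)
    have h2 := congrArg (fun x => (φ x).val) hsub
    have h1 := (φ ⟨a, ha⟩).is_lt
    simp only
    omega
  · have hfa : f a ∈ P := hmem' a ha
    rw [dif_neg ha, dif_pos hfa]
    have h1 := (φ ⟨f a, hmem' a ha⟩).is_lt
    simp only
    omega

private lemma groupEquiv (G : Type*) [Group G] [Finite G] :
    ∃ σ : G ≃ Fin (Nat.card G),
      (∀ u : G, ((σ u).val < Nat.card {u : G // u ^ 2 = 1} ↔ u ^ 2 = 1)) ∧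
      (∀ u : G, u ^ 2 ≠ 1 →
        (σ u).val + (σ u⁻¹).val
          = Nat.card G + Nat.card {u : G // u ^ 2 = 1} - 1) := by
  classical
  haveI : Fintype G := Fintype.ofFinite G
  set t := Nat.card {u : G // u ^ 2 = 1} with htdef
  set n := Nat.card G with hndef
  have ht_le : t ≤ n := by
    rw [htdef, hndef]
    exact Nat.card_le_card_of_injective Subtype.val Subtype.val_injective
  have hcardT : Nat.card {u : G // ¬ u ^ 2 = 1} = n - t := by
    rw [htdef, hndef]
    simp only [Nat.card_eq_fintype_card]
    exact Fintype.card_subtype_compl _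
  let fT : {u : G // ¬ u ^ 2 = 1} → {u : G // ¬ u ^ 2 = 1} := fun u =>
    ⟨u.1⁻¹, by rw [inv_pow, inv_eq_one]; exact u.2⟩
  have hfT : ∀ a, fT (fT a) = a := fun a => Subtype.ext (inv_inv _)
  have hfix : ∀ a, fT a ≠ a := by
    rintro ⟨u, hu⟩ hcon
    apply hu
    have h1 : u⁻¹ = u := congrArg Subtype.val hcon
    rw [sq]
    nth_rewrite 1 [← h1]
    exact inv_mul_cancel u
  obtain ⟨eT0, heT⟩ := involEquiv fT hfT hfix
  let eT : {u : G // ¬ u ^ 2 = 1} ≃ Fin (n - t) := eT0.trans (finCongr hcardT)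
  have heT' : ∀ a, (eT a).val + (eT (fT a)).val = n - t - 1 := by
    intro a
    have hval : ∀ b, (eT b).val = (eT0 b).val := fun b => rfl
    rw [hval, hval, heT a, hcardT]
  let eS : {u : G // u ^ 2 = 1} ≃ Fin t := Finite.equivFin _
  let g : G → Fin n := fun u =>
    if h : u ^ 2 = 1 then ⟨(eS ⟨u, h⟩).val, lt_of_lt_of_le (eS ⟨u, h⟩).is_lt ht_le⟩
    else ⟨t + (eT ⟨u, h⟩).val, by have := (eT ⟨u, h⟩).is_lt; omega⟩
  have hginj : Function.Injective g := by
    intro a b hab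
    simp only [g] at hab
    by_cases ha : a ^ 2 = 1 <;> by_cases hb : b ^ 2 = 1
    · rw [dif_pos ha, dif_pos hb] at hab
      have := eS.injective (Fin.ext (by simpa using congrArg Fin.val hab))
      exact congrArg Subtype.val this
    · rw [dif_pos ha, dif_neg hb] at hab
      have h1 := (eS ⟨a, ha⟩).is_lt
      have := congrArg Fin.val hab
      simp only at this
      omega
    · rw [dif_neg ha, dif_pos hb] at hab
      have h1 := (eS ⟨b, hb⟩).is_lt
      have := congrArg Fin.val hab
      simp only at this
      omega
    · rw [dif_neg ha, dif_neg hb] at hab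
      have := congrArg Fin.val hab
      simp only at this
      have heq : eT ⟨a, ha⟩ = eT ⟨b, hb⟩ := Fin.ext (by omega)
      exact congrArg Subtype.val (eT.injective heq)
  have hgbij : Function.Bijective g :=
    (Fintype.bijective_iff_injective_and_card g).mpr
      ⟨hginj, by simp [hndef, Nat.card_eq_fintype_card]⟩
  refine ⟨Equiv.ofBijective g hgbij, ?_, ?_⟩
  · intro u
    show (g u).val < t ↔ u ^ 2 = 1
    simp only [g]
    by_cases h : u ^ 2 = 1
    · rw [dif_pos h]
      exact ⟨fun _ => h, fun _ => (eS ⟨u, h⟩).is_lt⟩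
    · rw [dif_neg h]
      simp only
      exact ⟨fun hcon => absurd hcon (by omega), fun hcon => absurd hcon h⟩
  · intro u hu
    have hu' : ¬ (u⁻¹) ^ 2 = 1 := by rw [inv_pow, inv_eq_one]; exact hu
    show (g u).val + (g u⁻¹).val = n + t - 1
    simp only [g]
    rw [dif_neg hu, dif_neg hu']
    simp only
    have key : (eT ⟨u, hu⟩).val + (eT ⟨u⁻¹, hu'⟩).val = n - t - 1 := by
      have := heT' ⟨u, hu⟩
      have hsub : fT ⟨u, hu⟩ = ⟨u⁻¹, hu'⟩ := rfl
      rwa [hsub] at this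
    have h1 := (eT ⟨u, hu⟩).is_lt
    omega

theorem stmt_18 {R : Type*} [Ring R] [Fintype R]
    (hid : ∃ e : R, e ^ 2 = e ∧ e ≠ 0) (hu : Nonempty Rˣ) :
    Nonempty
      (Cl2 R ≃g
        Shu (Nat.card {u : Rˣ // u ^ 2 = 1}) (Nat.card Rˣ) (IdemGraph R)) := by
  classical
  obtain ⟨e0, he02, he0'⟩ := hid
  haveI : Nontrivial R := ⟨⟨e0, 0, he0'⟩⟩
  set t := Nat.card {u : Rˣ // u ^ 2 = 1} with htdef
  set n := Nat.card Rˣ with hndef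
  obtain ⟨σ, hσ1', hσ2'⟩ := groupEquiv Rˣ
  have hσ1 : ∀ u : Rˣ, (σ u).val < t ↔ u ^ 2 = 1 := hσ1'
  have hσ2 : ∀ u : Rˣ, u ^ 2 ≠ 1 → (σ u).val + (σ u⁻¹).val = n + t - 1 := hσ2'
  let V := {e : R // e ^ 2 = e ∧ e ≠ 0 ∧ e ≠ 1}
  let oe : {e : R // e ^ 2 = e ∧ e ≠ 0} ≃ Option V :=
  { toFun := fun e => if h : e.1 = 1 then none else some ⟨e.1, e.2.1, e.2.2, h⟩
    invFun := fun o => Option.elim o ⟨1, one_pow 2, one_ne_zero⟩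
      (fun f => ⟨f.1, f.2.1, f.2.2.1⟩)
    left_inv := fun e => by
      by_cases h : e.1 = 1
      · simp only [dif_pos h, Option.elim]
        exact Subtype.ext h.symm
      · simp only [dif_neg h, Option.elim]
    right_inv := fun o => by
      match o with
      | none => simp
      | some f => simp only [Option.elim]; exact dif_neg f.2.2.2 }
  have oe_val : ∀ (x : {e : R // e ^ 2 = e ∧ e ≠ 0}) (a : V),
      oe x = some a → x.1 = a.1 := by
    intro x a h
    by_cases hx : x.1 = 1
    · simp only [oe, Equiv.coe_fn_mk, dif_pos hx] at h
      cases h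
    · simp only [oe, Equiv.coe_fn_mk, dif_neg hx, Option.some.injEq] at h
      exact congrArg Subtype.val h
  have idem_facts : ∀ (x y : {e : R // e ^ 2 = e ∧ e ≠ 0}),
      x.1 * y.1 = 0 → y.1 * x.1 = 0 → x.1 ≠ 1 ∧ y.1 ≠ 1 ∧ x ≠ y := by
    intro x y h1 h2
    refine ⟨?_, ?_, ?_⟩
    · intro hx; exact y.2.2 (by rw [← one_mul y.1, ← hx, h1])
    · intro hy; exact x.2.2 (by rw [← one_mul x.1, ← hy, h2])
    · rintro rfl; exact x.2.2 (by rw [← x.2.1, sq, h1])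
  have sq_iff : ∀ u : Rˣ, u ^ 2 = 1 ↔ u⁻¹ = u := by
    intro u; rw [sq, inv_eq_iff_mul_eq_one]
  let Φ : ({e : R // e ^ 2 = e ∧ e ≠ 0} × Rˣ) ≃ (Fin n × Option V) :=
    (Equiv.prodComm _ _).trans (Equiv.prodCongr σ oe)
  refine ⟨⟨Φ, ?_⟩⟩
  intro x y
  obtain ⟨e, u⟩ := x
  obtain ⟨f, v⟩ := y
  show ((∃ a b, oe e = some a ∧ oe f = some b ∧ (IdemGraph R).Adj a b) ∨
      (σ u = σ v ∧ (σ u).val < t ∧ oe e ≠ oe f) ∨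
      (σ u ≠ σ v ∧ (σ u).val + (σ v).val = n + t - 1 ∧
        t ≤ (σ u).val ∧ t ≤ (σ v).val)) ↔
    (((e, u) : {e : R // e ^ 2 = e ∧ e ≠ 0} × Rˣ) ≠ (f, v) ∧
      ((e.1 * f.1 = 0 ∧ f.1 * e.1 = 0) ∨ (u * v = 1 ∧ v * u = 1)))
  constructor
  · rintro (⟨a, b, ha, hb, hab1, hab2⟩ | ⟨h1, h2, h3⟩ | ⟨h1, h2, h3, h4⟩)
    · have hea := oe_val e a ha
      have hfb := oe_val f b hb
      rw [← hea, ← hfb] at hab1 hab2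
      obtain ⟨-, -, hne⟩ := idem_facts e f hab1 hab2
      exact ⟨fun hp => hne (congrArg Prod.fst hp), Or.inl ⟨hab1, hab2⟩⟩
    · have huv : u = v := σ.injective h1
      have hu2 : u ^ 2 = 1 := (hσ1 u).mp h2
      have hef : e ≠ f := fun h => h3 (congrArg oe h)
      subst huv
      exact ⟨fun hp => hef (congrArg Prod.fst hp),
        Or.inr ⟨by rw [← sq]; exact hu2, by rw [← sq]; exact hu2⟩⟩
    · have hu2 : ¬ u ^ 2 = 1 := fun h => by
        have := (hσ1 u).mpr h; omega
      have key := hσ2 u hu2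
      have hval : (σ v).val = (σ u⁻¹).val := by omega
      have hv : v = u⁻¹ := σ.injective (Fin.ext hval)
      subst hv
      refine ⟨fun hp => h1 (congrArg (fun p => σ p.2) hp), Or.inr ⟨?_, ?_⟩⟩
      · exact mul_inv_cancel u
      · exact inv_mul_cancel u
  · rintro ⟨hne, ⟨h1, h2⟩ | ⟨h1, h2⟩⟩
    · obtain ⟨he1, hf1, -⟩ := idem_facts e f h1 h2
      exact Or.inl ⟨⟨e.1, e.2.1, e.2.2, he1⟩, ⟨f.1, f.2.1, f.2.2, hf1⟩,
        by simp only [oe, Equiv.coe_fn_mk, dif_neg he1],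
        by simp only [oe, Equiv.coe_fn_mk, dif_neg hf1], h1, h2⟩
    · have hv : v = u⁻¹ := (inv_eq_of_mul_eq_one_right h1).symm
      subst hv
      by_cases hu2 : u ^ 2 = 1
      · have huu : u⁻¹ = u := (sq_iff u).mp hu2
        have hef : e ≠ f := fun h => hne (Prod.ext h huu.symm)
        exact Or.inr (Or.inl ⟨(congrArg σ huu).symm, (hσ1 u).mpr hu2,
          fun hoe => hef (oe.injective hoe)⟩)
      · have hu2' : ¬ (u⁻¹) ^ 2 = 1 := by
          rw [inv_pow, inv_eq_one]; exact hu2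
        refine Or.inr (Or.inr ⟨?_, hσ2 u hu2, ?_, ?_⟩)
        · exact fun h => hu2 ((sq_iff u).mpr (σ.injective h).symm)
        · exact Nat.le_of_not_lt (fun hlt => hu2 ((hσ1 u).mp hlt))
        · exact Nat.le_of_not_lt (fun hlt => hu2' ((hσ1 u⁻¹).mp hlt))
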